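/- Let H be a linear subspace of ℝⁿ of dimension at most k ≤ n. Let u = (f₁ + x₁, …, fₙ + xₙ) where the fᵢ are fixed real numbers and the xᵢ are iid copies of a random variable ξ satisfying sup_a P(ξ = a) ≤ √(1 - c₃) for some constant 0 < c₃ ≤ 1. Then P(u ∈ H) ≤ (√(1 - c₃))^{n - k}. -/

import Mathlib

open MeasureTheory ProbabilityTheory

lemma exists_coords (n : ℕ) (H : Submodule ℝ (Fin n → ℝ)) :
    ∃ T : Finset (Fin n), T.card ≤ Module.finrank ℝ H ∧
      ∀ i : Fin n, ∃ c : Fin n → ℝ, ∀ v : Fin n → ℝ, v ∈ H → v i = ∑ j ∈ T, c j * v j := by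
  classical
  set φ : Fin n → Module.Dual ℝ H := fun i => (LinearMap.proj i).comp H.subtype with hφ
  obtain ⟨s, hs_sub, hs_span, hs_li⟩ := exists_linearIndependent ℝ (Set.range φ)
  have hsfin : s.Finite := hs_li.setFinite
  rcases isEmpty_or_nonempty (Fin n) with hemp | hne
  · exact ⟨∅, by simp, fun i => isEmptyElim i⟩
  · set T : Finset (Fin n) := hsfin.toFinset.image (Function.invFun φ) with hT
    have hsT : s ⊆ φ '' ↑T := by
      intro g hg
      refine ⟨Function.invFun φ g, ?_, ?_⟩
      · simp [hT, Set.Finite.mem_toFinset]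
        exact ⟨g, hg, rfl⟩
      · exact Function.invFun_eq (hs_sub hg)
    have hcard : T.card ≤ Module.finrank ℝ H := by
      calc T.card ≤ hsfin.toFinset.card := Finset.card_image_le
        _ ≤ Module.finrank ℝ (Module.Dual ℝ H) := by
              haveI := hsfin.fintype
              have h := hs_li.fintype_card_le_finrank
              rwa [Set.Finite.card_toFinset]
        _ = Module.finrank ℝ H := Subspace.dual_finrank_eq
    refine ⟨T, hcard, fun i => ?_⟩
    have hmem : φ i ∈ Submodule.span ℝ (φ '' ↑T) := by
      have h1 : φ i ∈ Submodule.span ℝ (Set.range φ) :=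
        Submodule.subset_span (Set.mem_range_self i)
      rw [← hs_span] at h1
      exact Submodule.span_mono hsT h1
    rw [Finsupp.mem_span_image_iff_linearCombination] at hmem
    obtain ⟨l, hl_supp, hl⟩ := hmem
    refine ⟨l, fun v hv => ?_⟩
    have h2 : (φ i) ⟨v, hv⟩ = (Finsupp.linearCombination ℝ φ l) ⟨v, hv⟩ := by rw [hl]
    have h3 : (Finsupp.linearCombination ℝ φ l) ⟨v, hv⟩ = ∑ j ∈ l.support, l j * v j := by
      rw [Finsupp.linearCombination_apply, Finsupp.sum]
      simp [hφ]
    have h4 : ∑ j ∈ l.support, l j * v j = ∑ j ∈ T, l j * v j := by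
      apply Finset.sum_subset
      · exact fun j hj => (Finsupp.mem_supported ℝ l).mp hl_supp hj
      · intro j _ hj
        simp [Finsupp.notMem_support_iff.mp hj]
    have h5 : (φ i) ⟨v, hv⟩ = v i := rfl
    rw [← h5, h2, h3, h4]

/-- Odlyzko's lemma: if `H ≤ ℝⁿ` has dimension at most `k ≤ n` and
`u = (f₁ + x₁, …, fₙ + xₙ)` with `xᵢ` iid whose atoms have probability at most
`√(1 - c₃)`, then `P(u ∈ H) ≤ (√(1 - c₃))^(n - k)`. -/
theorem odlyzko_lemma
    {Ω : Type*} [MeasureSpace Ω] [IsProbabilityMeasure (ℙ : Measure Ω)]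
    (n k : ℕ) (hkn : k ≤ n)
    (H : Submodule ℝ (Fin n → ℝ)) (hH : Module.finrank ℝ H ≤ k)
    (f : Fin n → ℝ) (x : Fin n → Ω → ℝ) (hmeas : ∀ i, Measurable (x i))
    (hindep : iIndepFun x ℙ)
    (hid : ∀ i j, IdentDistrib (x i) (x j))
    (c₃ : ℝ) (hc₃ : 0 < c₃) (hc₃1 : c₃ ≤ 1)
    (hatom : ∀ i, ∀ a : ℝ, ℙ {ω | x i ω = a} ≤ ENNReal.ofReal (Real.sqrt (1 - c₃))) :
    ℙ {ω | (fun i => f i + x i ω) ∈ H} ≤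
      ENNReal.ofReal (Real.sqrt (1 - c₃) ^ (n - k)) := by
  classical
  obtain ⟨T, hTcard, hT⟩ := exists_coords n H
  choose c hc using hT
  set p := ENNReal.ofReal (Real.sqrt (1 - c₃)) with hp
  have hp1 : p ≤ 1 := by
    rw [hp]
    exact ENNReal.ofReal_le_one.mpr (Real.sqrt_le_one.mpr (by linarith))
  set μ : Fin n → Measure ℝ := fun i => Measure.map (x i) ℙ with hμ
  haveI : ∀ i, IsProbabilityMeasure (μ i) := fun i =>
    Measure.isProbabilityMeasure_map (hmeas i).aemeasurable
  set X : Ω → Fin n → ℝ := fun ω i => x i ω with hX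
  have hXmeas : Measurable X := measurable_pi_lambda _ fun i => hmeas i
  have hmap : Measure.map X ℙ = Measure.pi μ := by
    refine (Measure.pi_eq fun s hs => ?_).symm
    rw [Measure.map_apply hXmeas (MeasurableSet.univ_pi hs)]
    have hpre : X ⁻¹' Set.pi Set.univ s = ⋂ i ∈ Finset.univ, x i ⁻¹' s i := by
      ext ω; simp [Set.mem_pi, hX]
    rw [hpre, hindep.measure_inter_preimage_eq_mul Finset.univ (fun i _ => hs i)]
    exact Finset.prod_congr rfl fun i _ => (Measure.map_apply (hmeas i) (hs i)).symm
  have hHc : IsClosed (H : Set (Fin n → ℝ)) := Submodule.closed_of_finiteDimensional H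
  set A : Set (Fin n → ℝ) := (fun u => f + u) ⁻¹' ↑H with hA
  have hAmeas : MeasurableSet A :=
    hHc.measurableSet.preimage (continuous_const.add continuous_id).measurable
  have hev : {ω | (fun i => f i + x i ω) ∈ H} = X ⁻¹' A := by
    ext ω; simp only [hA, Set.mem_preimage, Set.mem_setOf_eq, hX]
    constructor <;> intro h <;> convert h using 2 <;> rfl
  rw [hev, ← Measure.map_apply hXmeas hAmeas, hmap]
  -- split coordinates
  set e := MeasurableEquiv.piEquivPiSubtypeProd (fun _ : Fin n => ℝ) (· ∈ T) with he
  set G : {i : Fin n // ¬ i ∈ T} → ({j : Fin n // j ∈ T} → ℝ) → ℝ :=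
    fun i t => (∑ j ∈ T.attach, c i.1 j.1 * (f j.1 + t j)) - f i.1 with hG
  set B : Set (({j : Fin n // j ∈ T} → ℝ) × ({i : Fin n // ¬ i ∈ T} → ℝ)) :=
    {ts | ∀ i, ts.2 i = G i ts.1} with hB
  have hGmeas : ∀ i, Measurable fun t : {j : Fin n // j ∈ T} → ℝ => G i t := by
    intro i
    apply Measurable.sub _ measurable_const
    exact Finset.measurable_sum _ fun j _ => ((measurable_pi_apply j).const_add _).const_mul _
  have hBmeas : MeasurableSet B := by
    rw [hB, Set.setOf_forall]
    exact MeasurableSet.iInter fun i =>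
      measurableSet_eq_fun ((measurable_pi_apply i).comp' measurable_snd)
        ((hGmeas i).comp' measurable_fst)
  have hAB : A ⊆ e ⁻¹' B := by
    intro u hu
    intro i
    have h1 := hc i.1 (f + u) hu
    have h2 : ∑ j ∈ T.attach, c i.1 j.1 * (f j.1 + u j.1)
        = ∑ j ∈ T, c i.1 j * (f j + u j) := Finset.sum_attach T (fun j => c i.1 j * (f j + u j))
    simp only [he, MeasurableEquiv.piEquivPiSubtypeProd, Equiv.piEquivPiSubtypeProd,
      MeasurableEquiv.coe_mk, Equiv.coe_fn_mk]
    simp only [hG, h2]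
    have : (f + u) i.1 = f i.1 + u i.1 := rfl
    rw [this] at h1
    have h3 : ∀ j ∈ T, c i.1 j * ((f + u) j) = c i.1 j * (f j + u j) := fun j _ => rfl
    rw [Finset.sum_congr rfl h3] at h1
    linarith
  have hmp := MeasureTheory.measurePreserving_piEquivPiSubtypeProd μ (· ∈ T)
  have key := hmp.measure_preimage hBmeas.nullMeasurableSet
  refine le_trans (measure_mono hAB) ?_
  rw [key, Measure.prod_apply hBmeas]
  refine le_trans (lintegral_mono (g := fun _ => p ^ (n - k)) fun t => ?_) ?_
  · have hset : Prod.mk t ⁻¹' B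
        = Set.pi Set.univ (fun i : {i : Fin n // ¬ i ∈ T} => {G i t}) := by
      ext s; simp [hB, Set.mem_pi]
    rw [hset, Measure.pi_pi]
    have hbound : ∀ i : {i : Fin n // ¬ i ∈ T}, μ i.1 {G i t} ≤ p := by
      intro i
      rw [hμ, Measure.map_apply (hmeas i.1) (measurableSet_singleton _)]
      have hx : x i.1 ⁻¹' {G i t} = {ω | x i.1 ω = G i t} := by ext ω; simp
      rw [hx]
      exact hatom i.1 (G i t)
    calc ∏ i : {i : Fin n // ¬ i ∈ T}, μ i.1 {G i t}
        ≤ ∏ _i : {i : Fin n // ¬ i ∈ T}, p := Finset.prod_le_prod' fun i _ => hbound i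
      _ = p ^ (Fintype.card {i : Fin n // ¬ i ∈ T}) := by
          rw [Finset.prod_const, Finset.card_univ]
      _ ≤ p ^ (n - k) := by
          apply pow_le_pow_of_le_one zero_le hp1
          have hcard : Fintype.card {i : Fin n // ¬ i ∈ T} = n - T.card := by
            rw [Fintype.card_subtype_compl]
            simp [Fintype.card_subtype]
          rw [hcard]
          exact Nat.sub_le_sub_left (le_trans hTcard hH) n
  · rw [lintegral_const, measure_univ, mul_one, hp,
      ← ENNReal.ofReal_pow (Real.sqrt_nonneg _)]
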